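/- Let f : ℝᵈ → ℂ be Γ-periodic with f ∈ L²(Ω), where Ω is a fundamental cell of the lattice Γ with volume |Ω|. For ε > 0 define the Steklov smoothing operator (S_ε u)(x) = |Ω|^{-1} ∫_Ω u(x - εz) dz on L²(ℝᵈ). Then the operator u ↦ f(x/ε)·(S_ε u)(x) is bounded on L²(ℝᵈ) with norm at most |Ω|^{-1/2}·‖f‖_{L²(Ω)}. -/

import Mathlib

open MeasureTheory Pointwise
open scoped ENNReal NNReal

section Aux

variable {d : ℕ}

private lemma aux_countable (Γ : AddSubgroup (EuclideanSpace ℝ (Fin d)))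
    (Ω : Set (EuclideanSpace ℝ (Fin d)))
    (hΩ : IsAddFundamentalDomain Γ Ω volume) (hΩ0 : volume Ω ≠ 0) : Countable Γ := by
  have h := Measure.countable_meas_pos_of_disjoint_iUnion₀
    (μ := (volume : Measure (EuclideanSpace ℝ (Fin d))))
    (As := fun γ : Γ => γ +ᵥ Ω) (fun γ => hΩ.nullMeasurableSet_vadd γ) hΩ.aedisjoint
  rw [← Set.countable_univ_iff]
  have : {i : Γ | 0 < volume (i +ᵥ Ω)} = Set.univ := by
    refine Set.eq_univ_iff_forall.2 fun γ => ?_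
    simp only [Set.mem_setOf_eq, measure_vadd]
    exact hΩ0.bot_lt
  rwa [this] at h

private lemma aux_restrict_vadd (Ω : Set (EuclideanSpace ℝ (Fin d)))
    (w : EuclideanSpace ℝ (Fin d)) :
    (volume.restrict (w +ᵥ Ω)) =
      (volume.restrict Ω).map (MeasurableEquiv.addLeft w) := by
  set e : EuclideanSpace ℝ (Fin d) ≃ᵐ EuclideanSpace ℝ (Fin d) :=
    MeasurableEquiv.addLeft w with he
  have hpre : e ⁻¹' (w +ᵥ Ω) = Ω := by
    ext x
    simp only [Set.mem_preimage, he, MeasurableEquiv.coe_addLeft,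
      Set.mem_vadd_set_iff_neg_vadd_mem, vadd_eq_add]
    constructor
    · intro h; rwa [neg_add_cancel_left] at h
    · intro h; rwa [neg_add_cancel_left]
  conv_lhs => rw [← (measurePreserving_add_left volume w).map_eq]
  rw [show ((fun x => w + x)) = ⇑e from rfl, e.restrict_map, hpre]

private lemma aux_aesm (Γ : AddSubgroup (EuclideanSpace ℝ (Fin d))) [Countable Γ]
    (Ω : Set (EuclideanSpace ℝ (Fin d)))
    (hΩ : IsAddFundamentalDomain Γ Ω volume)
    (f : EuclideanSpace ℝ (Fin d) → ℂ) (hper : ∀ γ ∈ Γ, ∀ x, f (x + γ) = f x)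
    (hf : AEStronglyMeasurable f (volume.restrict Ω)) :
    AEStronglyMeasurable f (volume : Measure (EuclideanSpace ℝ (Fin d))) := by
  have hsum := hΩ.sum_restrict_of_ac (Measure.AbsolutelyContinuous.refl volume)
  rw [← hsum, aestronglyMeasurable_sum_measure_iff]
  intro γ
  have hvadd : (γ +ᵥ Ω) = ((γ : EuclideanSpace ℝ (Fin d)) +ᵥ Ω) := rfl
  rw [hvadd, aux_restrict_vadd Ω (γ : EuclideanSpace ℝ (Fin d)),
    (MeasurableEquiv.addLeft (γ : EuclideanSpace ℝ (Fin d))).measurableEmbedding.aestronglyMeasurable_map_iff]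
  have : f ∘ (MeasurableEquiv.addLeft (γ : EuclideanSpace ℝ (Fin d))) = f := by
    funext x
    simp only [Function.comp_apply, MeasurableEquiv.coe_addLeft]
    rw [add_comm]
    exact hper γ γ.2 x
  rwa [this]

end Aux

/-- Zhikov–Pastukhova Lemma 1.2. Let `Γ` be a lattice in `ℝᵈ` with fundamental cell `Ω`
(of positive finite volume), and let `f` be `Γ`-periodic with `f ∈ L²(Ω)`. For `ε > 0`, the
operator `u ↦ f(x/ε)·(S_ε u)(x)`, where `(S_ε u)(x) = |Ω|⁻¹ ∫_Ω u(x - εz) dz` is the Steklov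
smoothing operator, is bounded on `L²(ℝᵈ)` with norm at most `|Ω|^{-1/2}·‖f‖_{L²(Ω)}`. -/
theorem stmt7 {d : ℕ} (Γ : AddSubgroup (EuclideanSpace ℝ (Fin d)))
    (Ω : Set (EuclideanSpace ℝ (Fin d)))
    (hΩ : IsAddFundamentalDomain Γ Ω (volume : Measure (EuclideanSpace ℝ (Fin d))))
    (hΩ0 : volume Ω ≠ 0) (hΩfin : volume Ω ≠ ⊤)
    (f : EuclideanSpace ℝ (Fin d) → ℂ)
    (hper : ∀ γ ∈ Γ, ∀ x, f (x + γ) = f x)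
    (hf : MemLp f 2 (volume.restrict Ω))
    (ε : ℝ) (hε : 0 < ε) (u : EuclideanSpace ℝ (Fin d) → ℂ) (hu : MemLp u 2 volume) :
    eLpNorm
        (fun x => f (ε⁻¹ • x) * ((volume Ω).toReal⁻¹ • ∫ z in Ω, u (x - ε • z))) 2 volume ≤
      ENNReal.ofReal ((volume Ω).toReal ^ (-(1 / 2 : ℝ)) *
          (∫ x in Ω, ‖f x‖ ^ 2) ^ (1 / 2 : ℝ)) * eLpNorm u 2 volume := by
  classical
  have : Countable Γ := aux_countable Γ Ω hΩ hΩ0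
  -- global measurability of f
  have hFglob : AEStronglyMeasurable f (volume : Measure (EuclideanSpace ℝ (Fin d))) :=
    aux_aesm Γ Ω hΩ f hper hf.1
  -- measurable representatives
  set f' : EuclideanSpace ℝ (Fin d) → ℂ := hFglob.mk f with hf'def
  have mf' : Measurable f' := hFglob.stronglyMeasurable_mk.measurable
  have hff' : f =ᵐ[volume] f' := hFglob.ae_eq_mk
  set u' : EuclideanSpace ℝ (Fin d) → ℂ := hu.1.mk u with hu'def
  have mu' : Measurable u' := hu.1.stronglyMeasurable_mk.measurable
  have huu' : u =ᵐ[volume] u' := hu.1.ae_eq_mk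
  have hNf : volume {x : EuclideanSpace ℝ (Fin d) | f x ≠ f' x} = 0 := ae_iff.1 hff'
  have hNu : volume {x : EuclideanSpace ℝ (Fin d) | u x ≠ u' x} = 0 := ae_iff.1 huu'
  -- quasi measure preserving maps
  have qmpS : Measure.QuasiMeasurePreserving (fun x : EuclideanSpace ℝ (Fin d) => ε⁻¹ • x) volume volume :=
    Measure.quasiMeasurePreserving_smul volume (inv_ne_zero hε.ne')
  have qmpT : ∀ x : EuclideanSpace ℝ (Fin d), Measure.QuasiMeasurePreserving (fun z : EuclideanSpace ℝ (Fin d) => x - ε • z) volume volume := by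
    intro x
    have h1 : Measure.QuasiMeasurePreserving (fun z : EuclideanSpace ℝ (Fin d) => (-ε) • z) volume volume :=
      Measure.quasiMeasurePreserving_smul volume (neg_ne_zero.2 hε.ne')
    have h2 := (measurePreserving_add_left (volume : Measure (EuclideanSpace ℝ (Fin d))) x).quasiMeasurePreserving
    have h3 := h2.comp h1
    have : ((fun w : EuclideanSpace ℝ (Fin d) => x + w) ∘ fun z : EuclideanSpace ℝ (Fin d) => (-ε) • z) = fun z : EuclideanSpace ℝ (Fin d) => x - ε • z := by
      funext z; simp [Function.comp, sub_eq_add_neg, neg_smul]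
    rwa [this] at h3
  -- step 1: replace f, u by measurable representatives
  have hSint : ∀ x : EuclideanSpace ℝ (Fin d), (∫ z in Ω, u (x - ε • z)) = ∫ z in Ω, u' (x - ε • z) := by
    intro x
    refine integral_congr_ae (ae_restrict_of_ae ?_)
    have h0 : volume ((fun z : EuclideanSpace ℝ (Fin d) => x - ε • z) ⁻¹' {y : EuclideanSpace ℝ (Fin d) | u y ≠ u' y}) = 0 :=
      (qmpT x).preimage_null hNu
    rw [ae_iff]
    refine measure_mono_null (fun z hz => ?_) h0
    exact hz
  have hstep1 : eLpNorm
      (fun x => f (ε⁻¹ • x) * ((volume Ω).toReal⁻¹ • ∫ z in Ω, u (x - ε • z))) 2 volume =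
      eLpNorm
      (fun x => f' (ε⁻¹ • x) * ((volume Ω).toReal⁻¹ • ∫ z in Ω, u' (x - ε • z))) 2 volume := by
    refine eLpNorm_congr_ae ?_
    have hfae : ∀ᵐ x ∂(volume : Measure (EuclideanSpace ℝ (Fin d))), f (ε⁻¹ • x) = f' (ε⁻¹ • x) := by
      have h0 : volume ((fun x : EuclideanSpace ℝ (Fin d) => ε⁻¹ • x) ⁻¹' {y : EuclideanSpace ℝ (Fin d) | f y ≠ f' y}) = 0 :=
        qmpS.preimage_null hNf
      rw [ae_iff]
      exact measure_mono_null (fun x hx => hx) h0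
    filter_upwards [hfae] with x hx
    rw [hx, hSint x]
  rw [hstep1]
  -- notation
  set G : EuclideanSpace ℝ (Fin d) → ℂ :=
    fun x => f' (ε⁻¹ • x) * ((volume Ω).toReal⁻¹ • ∫ z in Ω, u' (x - ε • z)) with hGdef
  set F : EuclideanSpace ℝ (Fin d) → ℝ≥0∞ := fun y => (‖f y‖₊ : ℝ≥0∞) ^ 2 with hFdef
  set F' : EuclideanSpace ℝ (Fin d) → ℝ≥0∞ := fun y => (‖f' y‖₊ : ℝ≥0∞) ^ 2 with hF'def
  set U' : EuclideanSpace ℝ (Fin d) → ℝ≥0∞ := fun y => (‖u' y‖₊ : ℝ≥0∞) ^ 2 with hU'def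
  set k : ℝ≥0∞ := (volume Ω)⁻¹ with hkdef
  have hkne : k ≠ ⊤ := by simp [hkdef, hΩ0]
  set IF : ℝ≥0∞ := ∫⁻ z in Ω, F z with hIFdef
  set B : ℝ≥0∞ := ∫⁻ y, U' y with hBdef
  have h2 : ∀ a : ℝ≥0∞, a ^ (2 : ℝ) = a ^ (2 : ℕ) := fun a => by
    rw [← ENNReal.rpow_natCast]; norm_num
  have mF' : Measurable F' := (mf'.nnnorm.coe_nnreal_ennreal).pow_const 2
  have mU' : Measurable U' := (mu'.nnnorm.coe_nnreal_ennreal).pow_const 2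
  have hF'ne : ∀ y, F' y ≠ ⊤ := fun y => by
    simp [hF'def]
  have hU'ne : ∀ y, U' y ≠ ⊤ := fun y => by
    simp [hU'def]
  -- the coefficient
  have hcoef : (‖(volume Ω).toReal⁻¹‖₊ : ℝ≥0∞) = k := by
    have h0 : (0:ℝ) ≤ (volume Ω).toReal⁻¹ := inv_nonneg.2 ENNReal.toReal_nonneg
    rw [← enorm_eq_nnnorm, ← ofReal_norm, Real.norm_of_nonneg h0,
      ENNReal.ofReal_inv_of_pos (ENNReal.toReal_pos hΩ0 hΩfin), ENNReal.ofReal_toReal hΩfin]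
  -- pointwise bound
  have A1 : ∀ x : EuclideanSpace ℝ (Fin d), (‖G x‖₊ : ℝ≥0∞) ^ 2 ≤
      k * (F' (ε⁻¹ • x) * ∫⁻ z in Ω, U' (x - ε • z)) := by
    intro x
    set S : ℂ := ∫ z in Ω, u' (x - ε • z) with hSdef
    have hGx : (‖G x‖₊ : ℝ≥0∞) ^ 2 =
        F' (ε⁻¹ • x) * ((k * (‖S‖₊ : ℝ≥0∞)) ^ 2) := by
      rw [hGdef]
      simp only [nnnorm_mul, nnnorm_smul, ENNReal.coe_mul, mul_pow, hF'def, ← hSdef, hcoef]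
    -- Cauchy-Schwarz
    set φ : EuclideanSpace ℝ (Fin d) → ℝ≥0∞ := fun z => (‖u' (x - ε • z)‖₊ : ℝ≥0∞) with hφdef
    have mφ : Measurable φ := by
      have : Measurable fun z : EuclideanSpace ℝ (Fin d) => x - ε • z :=
        measurable_const.sub (measurable_id.const_smul ε)
      exact (mu'.comp this).nnnorm.coe_nnreal_ennreal
    have hCS : (∫⁻ z in Ω, φ z) ^ 2 ≤ volume Ω * ∫⁻ z in Ω, U' (x - ε • z) := by
      have hpq : Real.HolderConjugate 2 2 := Real.HolderConjugate.two_two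
      have hH := ENNReal.lintegral_mul_le_Lp_mul_Lq (volume.restrict Ω) hpq
        mφ.aemeasurable (aemeasurable_const (b := (1:ℝ≥0∞)))
      simp only [Pi.mul_apply, mul_one, ENNReal.one_rpow, lintegral_one,
        Measure.restrict_apply_univ] at hH
      have hH2 := pow_le_pow_left₀ zero_le hH 2
      calc (∫⁻ z in Ω, φ z) ^ 2
          ≤ ((∫⁻ z in Ω, φ z ^ (2:ℝ)) ^ (1/(2:ℝ)) * (volume Ω) ^ (1/(2:ℝ))) ^ 2 := hH2
        _ = (∫⁻ z in Ω, φ z ^ (2:ℝ)) * volume Ω := by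
            rw [mul_pow, ← ENNReal.rpow_natCast ((∫⁻ z in Ω, φ z ^ (2:ℝ)) ^ (1/(2:ℝ))) 2,
              ← ENNReal.rpow_natCast ((volume Ω) ^ (1/(2:ℝ))) 2,
              ← ENNReal.rpow_mul, ← ENNReal.rpow_mul]
            norm_num
        _ = (∫⁻ z in Ω, U' (x - ε • z)) * volume Ω := by
            congr 1
            refine lintegral_congr fun z => ?_
            rw [h2]
        _ = volume Ω * ∫⁻ z in Ω, U' (x - ε • z) := mul_comm _ _
    have hS1 : (‖S‖₊ : ℝ≥0∞) ≤ ∫⁻ z in Ω, φ z :=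
      enorm_integral_le_lintegral_enorm _
    calc (‖G x‖₊ : ℝ≥0∞) ^ 2
        = F' (ε⁻¹ • x) * ((k * (‖S‖₊ : ℝ≥0∞)) ^ 2) := hGx
      _ = F' (ε⁻¹ • x) * (k ^ 2 * (‖S‖₊ : ℝ≥0∞) ^ 2) := by rw [mul_pow]
      _ ≤ F' (ε⁻¹ • x) * (k ^ 2 * (volume Ω * ∫⁻ z in Ω, U' (x - ε • z))) := by
          refine mul_le_mul_right (mul_le_mul_right ?_ _) _
          exact le_trans (pow_le_pow_left₀ zero_le hS1 2) hCS
      _ = F' (ε⁻¹ • x) * (k * ∫⁻ z in Ω, U' (x - ε • z)) := by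
          rw [sq, mul_assoc k k, ← mul_assoc k (volume Ω), hkdef,
            ENNReal.inv_mul_cancel hΩ0 hΩfin, one_mul]
      _ = k * (F' (ε⁻¹ • x) * ∫⁻ z in Ω, U' (x - ε • z)) := by ring
  -- integral computation (the main computation)
  have A3 : (∫⁻ x, F' (ε⁻¹ • x) * ∫⁻ z in Ω, U' (x - ε • z)) = IF * B := by
    have step_a : (∫⁻ x, F' (ε⁻¹ • x) * ∫⁻ z in Ω, U' (x - ε • z)) =
        ∫⁻ x, ∫⁻ z in Ω, F' (ε⁻¹ • x) * U' (x - ε • z) := by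
      refine lintegral_congr fun x => ?_
      rw [lintegral_const_mul' _ _ (hF'ne _)]
    have mprod1 : Measurable fun p : EuclideanSpace ℝ (Fin d) × EuclideanSpace ℝ (Fin d) => F' (ε⁻¹ • p.1) * U' (p.1 - ε • p.2) := by
      have m1 : Measurable fun p : EuclideanSpace ℝ (Fin d) × EuclideanSpace ℝ (Fin d) => ε⁻¹ • p.1 := measurable_fst.const_smul ε⁻¹
      have m2 : Measurable fun p : EuclideanSpace ℝ (Fin d) × EuclideanSpace ℝ (Fin d) => p.1 - ε • p.2 :=
        measurable_fst.sub (measurable_snd.const_smul ε)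
      exact (mF'.comp m1).mul (mU'.comp m2)
    have step_b : (∫⁻ x, ∫⁻ z in Ω, F' (ε⁻¹ • x) * U' (x - ε • z)) =
        ∫⁻ z in Ω, ∫⁻ x, F' (ε⁻¹ • x) * U' (x - ε • z) :=
      lintegral_lintegral_swap mprod1.aemeasurable
    have step_c : ∀ z : EuclideanSpace ℝ (Fin d), (∫⁻ x, F' (ε⁻¹ • x) * U' (x - ε • z)) =
        ∫⁻ y, F' (ε⁻¹ • y + z) * U' y := by
      intro z
      rw [← lintegral_add_right_eq_self (fun x => F' (ε⁻¹ • x) * U' (x - ε • z)) (ε • z)]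
      refine lintegral_congr fun y => ?_
      have e1 : ε⁻¹ • (y + ε • z) = ε⁻¹ • y + z := by
        rw [smul_add, smul_smul, inv_mul_cancel₀ hε.ne', one_smul]
      have e2 : y + ε • z - ε • z = y := add_sub_cancel_right y (ε • z)
      rw [e1, e2]
    have mprod2 : Measurable fun p : EuclideanSpace ℝ (Fin d) × EuclideanSpace ℝ (Fin d) => F' (ε⁻¹ • p.2 + p.1) * U' p.2 := by
      have m1 : Measurable fun p : EuclideanSpace ℝ (Fin d) × EuclideanSpace ℝ (Fin d) => ε⁻¹ • p.2 + p.1 :=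
        (measurable_snd.const_smul ε⁻¹).add measurable_fst
      exact (mF'.comp m1).mul (mU'.comp measurable_snd)
    have step_d : (∫⁻ z in Ω, ∫⁻ y, F' (ε⁻¹ • y + z) * U' y) =
        ∫⁻ y, ∫⁻ z in Ω, F' (ε⁻¹ • y + z) * U' y :=
      lintegral_lintegral_swap (μ := volume.restrict Ω) (ν := volume) mprod2.aemeasurable
    have step_f : ∀ w : EuclideanSpace ℝ (Fin d), (∫⁻ z in Ω, F' (w + z)) = IF := by
      intro w
      have f1 : (∫⁻ z in Ω, F' (w + z)) = ∫⁻ z in Ω, F (w + z) := by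
        refine lintegral_congr_ae (ae_restrict_of_ae ?_)
        have h0 : volume ((fun z : EuclideanSpace ℝ (Fin d) => w + z) ⁻¹' {y : EuclideanSpace ℝ (Fin d) | f y ≠ f' y}) = 0 :=
          (measurePreserving_add_left (volume : Measure (EuclideanSpace ℝ (Fin d))) w).quasiMeasurePreserving.preimage_null
            hNf
        rw [ae_iff]
        refine measure_mono_null (fun z hz => ?_) h0
        simp only [Set.mem_setOf_eq, Set.mem_preimage] at hz ⊢
        intro hc
        exact hz (show (‖f' (w + z)‖₊ : ℝ≥0∞) ^ 2 = (‖f (w + z)‖₊ : ℝ≥0∞) ^ 2 from by rw [hc])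
      have f2 : (∫⁻ z in Ω, F (w + z)) = ∫⁻ x in (w +ᵥ Ω), F x := by
        rw [aux_restrict_vadd Ω w, lintegral_map_equiv]
        rfl
      have hFinv : ∀ (γ : Γ) (x : EuclideanSpace ℝ (Fin d)), F (γ +ᵥ x) = F x := by
        intro γ x
        have : (γ +ᵥ x : EuclideanSpace ℝ (Fin d)) = x + γ := by
          rw [AddSubgroup.vadd_def, vadd_eq_add, add_comm]
        rw [hFdef]
        simp only [this]
        rw [hper γ γ.2 x]
      have f3 : (∫⁻ x in (w +ᵥ Ω), F x) = IF :=
        (hΩ.vadd_of_comm w).setLIntegral_eq hΩ F hFinv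
      rw [f1, f2, f3]
    have hIFne : IF ≠ ⊤ := by
      have := hf.2
      rw [eLpNorm_eq_lintegral_rpow_enorm_toReal two_ne_zero ENNReal.ofNat_ne_top] at this
      simp only [ENNReal.toReal_ofNat, enorm_eq_nnnorm] at this
      have hlt : (∫⁻ x in Ω, (‖f x‖₊ : ℝ≥0∞) ^ (2:ℝ)) < ⊤ := by
        by_contra hc
        rw [not_lt, top_le_iff] at hc
        rw [hc] at this
        rw [ENNReal.top_rpow_of_pos (by norm_num)] at this
        exact (lt_irrefl _ this).elim
      rw [hIFdef]
      refine ne_of_lt (lt_of_le_of_lt (le_of_eq ?_) hlt)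
      refine lintegral_congr fun x => ?_
      rw [h2]
    calc (∫⁻ x, F' (ε⁻¹ • x) * ∫⁻ z in Ω, U' (x - ε • z))
        = ∫⁻ z in Ω, ∫⁻ x, F' (ε⁻¹ • x) * U' (x - ε • z) := by rw [step_a, step_b]
      _ = ∫⁻ z in Ω, ∫⁻ y, F' (ε⁻¹ • y + z) * U' y := lintegral_congr fun z => step_c z
      _ = ∫⁻ y, ∫⁻ z in Ω, F' (ε⁻¹ • y + z) * U' y := step_d
      _ = ∫⁻ y, IF * U' y := by
          refine lintegral_congr fun y => ?_
          rw [lintegral_mul_const' _ _ (hU'ne y), step_f (ε⁻¹ • y)]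
      _ = IF * B := lintegral_const_mul' _ _ hIFne
  -- total bound on the lintegral
  have Atot : (∫⁻ x, (‖G x‖₊ : ℝ≥0∞) ^ (2:ℝ)) ≤ k * (IF * B) := by
    calc (∫⁻ x, (‖G x‖₊ : ℝ≥0∞) ^ (2:ℝ))
        = ∫⁻ x, (‖G x‖₊ : ℝ≥0∞) ^ (2:ℕ) := lintegral_congr fun x => h2 _
      _ ≤ ∫⁻ x, k * (F' (ε⁻¹ • x) * ∫⁻ z in Ω, U' (x - ε • z)) := lintegral_mono A1
      _ = k * ∫⁻ x, F' (ε⁻¹ • x) * ∫⁻ z in Ω, U' (x - ε • z) :=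
          lintegral_const_mul' _ _ hkne
      _ = k * (IF * B) := by rw [A3]
  -- convert to eLpNorm bound
  have hGnorm : eLpNorm G 2 volume = (∫⁻ x, (‖G x‖₊ : ℝ≥0∞) ^ (2:ℝ)) ^ (1/(2:ℝ)) := by
    rw [eLpNorm_eq_lintegral_rpow_enorm_toReal two_ne_zero ENNReal.ofNat_ne_top]
    simp [ENNReal.toReal_ofNat, enorm_eq_nnnorm]
  have hbound : eLpNorm G 2 volume ≤ k ^ (1/(2:ℝ)) * (IF ^ (1/(2:ℝ)) * B ^ (1/(2:ℝ))) := by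
    rw [hGnorm]
    calc (∫⁻ x, (‖G x‖₊ : ℝ≥0∞) ^ (2:ℝ)) ^ (1/(2:ℝ))
        ≤ (k * (IF * B)) ^ (1/(2:ℝ)) := ENNReal.rpow_le_rpow Atot (by norm_num)
      _ = k ^ (1/(2:ℝ)) * (IF ^ (1/(2:ℝ)) * B ^ (1/(2:ℝ))) := by
          rw [ENNReal.mul_rpow_of_nonneg _ _ (by norm_num : (0:ℝ) ≤ 1/2),
            ENNReal.mul_rpow_of_nonneg _ _ (by norm_num : (0:ℝ) ≤ 1/2)]
  -- identify the right-hand side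
  have hInt : Integrable (fun x => ‖f x‖ ^ 2) (volume.restrict Ω) := by
    have := hf.integrable_norm_rpow two_ne_zero ENNReal.ofNat_ne_top
    refine this.congr (Filter.Eventually.of_forall fun x => ?_)
    simp only [ENNReal.toReal_ofNat]
    rw [show ((2:ℝ) = ((2:ℕ):ℝ)) by norm_num, Real.rpow_natCast]
  have hIF : IF = ENNReal.ofReal (∫ x in Ω, ‖f x‖ ^ 2) := by
    rw [ofReal_integral_eq_lintegral_ofReal hInt
      (Filter.Eventually.of_forall fun x => by positivity)]
    refine (lintegral_congr fun x => ?_).symm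
    rw [hFdef, ENNReal.ofReal_pow (norm_nonneg _), ofReal_norm, enorm_eq_nnnorm]
  have hBu : B ^ (1/(2:ℝ)) = eLpNorm u 2 volume := by
    rw [eLpNorm_eq_lintegral_rpow_enorm_toReal two_ne_zero ENNReal.ofNat_ne_top]
    simp only [ENNReal.toReal_ofNat, enorm_eq_nnnorm]
    congr 1
    rw [hBdef]
    refine lintegral_congr_ae ?_
    filter_upwards [huu'] with x hx
    rw [hU'def, h2, hx]
  have hkhalf : ENNReal.ofReal ((volume Ω).toReal ^ (-(1 / 2 : ℝ))) = k ^ (1/(2:ℝ)) := by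
    have ht : (0:ℝ) < (volume Ω).toReal := ENNReal.toReal_pos hΩ0 hΩfin
    rw [← ENNReal.ofReal_rpow_of_pos ht, ENNReal.ofReal_toReal hΩfin, hkdef,
      ENNReal.rpow_neg, ← ENNReal.inv_rpow]
  have hIFhalf : ENNReal.ofReal ((∫ x in Ω, ‖f x‖ ^ 2) ^ (1 / 2 : ℝ)) = IF ^ (1/(2:ℝ)) := by
    rw [hIF, ← ENNReal.ofReal_rpow_of_nonneg (integral_nonneg fun x => by positivity)
      (by norm_num : (0:ℝ) ≤ 1/2)]
  calc eLpNorm G 2 volume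
      ≤ k ^ (1/(2:ℝ)) * (IF ^ (1/(2:ℝ)) * B ^ (1/(2:ℝ))) := hbound
    _ = ENNReal.ofReal ((volume Ω).toReal ^ (-(1 / 2 : ℝ)) *
          (∫ x in Ω, ‖f x‖ ^ 2) ^ (1 / 2 : ℝ)) * eLpNorm u 2 volume := by
        rw [ENNReal.ofReal_mul (Real.rpow_nonneg ENNReal.toReal_nonneg _),
          hkhalf, hIFhalf, hBu, mul_assoc]
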